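/- (Lemma 2 of the paper.) Let T > 0, let (Ω, 𝔽, μ) be a probability space, and let X : Ω → (ℝ → ℝ) be such that for every ω, X ω restricted to [0,T] is continuously differentiable, the map (ω,t) ↦ (X ω)'(t) is jointly measurable, and there is a constant M with |(X ω)'(t)| ≤ M for all ω and t ∈ [0,T]. Let (X_n)_{n≥1} be an i.i.d. sequence of copies of X. For ε > 0 with K := T/ε ∈ ℕ and grid points t = ε, 2ε, …, T, define the divided differences X_n^{diff,ε}(t) := (X_n(t) − X_n(t−ε))/ε, and for each N the empirical quantity S_{N,ε} := (ε/T)∑_{t=ε,2ε,…,T} numstd[(X_n^{diff,ε}(t))_{n=1:N}]. Then almost surely, for every ε with T/ε ∈ ℕ the limit L_ε := lim_{N→∞} S_{N,ε} exists, and L_ε → MPGD as ε → 0 (along ε with T/ε ∈ ℕ). -/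

import Mathlib

open MeasureTheory ProbabilityTheory intervalIntegral Filter

/-- The mean point-wise gradient deviation of a random `C¹` function `X` on `[0,T]`:
`MPGD = (1/T)∫₀ᵀ √(E[((X·)'(t) − E[(X·)'(t)])²]) dt`, i.e. the time-average of the
point-wise standard deviation of the derivative. -/
noncomputable def MPGD {Ω : Type*} [MeasurableSpace Ω] (μ : Measure Ω)
    (T : ℝ) (X : Ω → ℝ → ℝ) : ℝ :=
  (1 / T) * ∫ t in (0:ℝ)..T,
    Real.sqrt (∫ ω, (deriv (X ω) t - ∫ ω', deriv (X ω') t ∂μ) ^ 2 ∂μ)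

/-- The numerical standard deviation of the finite tuple `(y 0, …, y (N-1))`:
`numstd[(y_n)] = √((1/N)∑_n (y_n − ȳ)²)` where `ȳ` is the arithmetic mean. -/
noncomputable def numstd (N : ℕ) (y : ℕ → ℝ) : ℝ :=
  Real.sqrt ((1 / (N : ℝ)) * ∑ n ∈ Finset.range N,
    (y n - (1 / (N : ℝ)) * ∑ j ∈ Finset.range N, y j) ^ 2)

namespace Statement13Aux
set_option linter.unusedSectionVars false

lemma numstd_eq (N : ℕ) (y : ℕ → ℝ) :
    numstd N y = Real.sqrt ((∑ n ∈ Finset.range N, (y n) ^ 2) / N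
      - ((∑ n ∈ Finset.range N, y n) / N) ^ 2) := by
  rcases Nat.eq_zero_or_pos N with h | h
  · simp [numstd, h]
  · have hN : (N : ℝ) ≠ 0 := Nat.cast_ne_zero.2 h.ne'
    unfold numstd
    congr 1
    have expand : ∀ c : ℝ, ∑ n ∈ Finset.range N, (y n - c) ^ 2
        = ∑ n ∈ Finset.range N, (y n) ^ 2 - 2 * c * ∑ n ∈ Finset.range N, y n
          + N * c ^ 2 := by
      intro c
      rw [Finset.mul_sum, ← Finset.sum_sub_distrib]
      rw [show ((N : ℝ) * c ^ 2) = ∑ _n ∈ Finset.range N, c ^ 2 by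
        rw [Finset.sum_const, Finset.card_range, nsmul_eq_mul]]
      rw [← Finset.sum_add_distrib]
      exact Finset.sum_congr rfl fun n _ => by ring
    rw [expand]
    field_simp
    ring

lemma var_identity {Ω : Type*} [MeasurableSpace Ω] (μ : Measure Ω) [IsProbabilityMeasure μ]
    {f : Ω → ℝ} (hf : Integrable f μ) (hf2 : Integrable (fun ω => f ω ^ 2) μ) :
    ∫ ω, (f ω - ∫ ω', f ω' ∂μ) ^ 2 ∂μ = (∫ ω, f ω ^ 2 ∂μ) - (∫ ω, f ω ∂μ) ^ 2 := by
  set c := ∫ ω', f ω' ∂μ with hc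
  have h1 : (fun ω => (f ω - c) ^ 2) = fun ω => (f ω ^ 2 - (2 * c) * f ω) + c ^ 2 := by
    funext ω; ring
  have hint : Integrable (fun ω => f ω ^ 2 - (2 * c) * f ω) μ := hf2.sub (hf.const_mul (2 * c))
  rw [h1, integral_add hint (integrable_const _),
    integral_sub hf2 (hf.const_mul (2 * c)), MeasureTheory.integral_const_mul, MeasureTheory.integral_const]
  simp only [measure_univ, measureReal_def, ENNReal.toReal_one, smul_eq_mul, one_mul, ← hc]
  ring

/-- The divided difference of `X ω` over `[kε, (k+1)ε]`. -/
noncomputable def DD {Ω : Type*} (X : Ω → ℝ → ℝ) (ε : ℝ) (k : ℕ) (ω : Ω) : ℝ :=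
  (X ω (((k : ℝ) + 1) * ε) - X ω ((k : ℝ) * ε)) / ε

noncomputable def mDD {Ω : Type*} [MeasurableSpace Ω] (μ : Measure Ω)
    (X : Ω → ℝ → ℝ) (ε : ℝ) (k : ℕ) : ℝ := ∫ ω, DD X ε k ω ∂μ

noncomputable def qDD {Ω : Type*} [MeasurableSpace Ω] (μ : Measure Ω)
    (X : Ω → ℝ → ℝ) (ε : ℝ) (k : ℕ) : ℝ := ∫ ω, (DD X ε k ω) ^ 2 ∂μ

/-- The deterministic limit of the empirical quantity. -/
noncomputable def Lstep {Ω : Type*} [MeasurableSpace Ω] (μ : Measure Ω)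
    (T : ℝ) (X : Ω → ℝ → ℝ) (ε : ℝ) : ℝ :=
  (ε / T) * ∑ k ∈ Finset.range ⌊T / ε⌋₊,
    Real.sqrt (qDD μ X ε k - (mDD μ X ε k) ^ 2)

section

variable {Ω : Type*} [MeasurableSpace Ω] {μ : Measure Ω} [IsProbabilityMeasure μ]
  {T M : ℝ} {X : Ω → ℝ → ℝ}

lemma abs_DD_le (hC1 : ∀ ω, ContDiff ℝ 1 (X ω))
    (hM : ∀ ω, ∀ t ∈ Set.Icc (0:ℝ) T, |deriv (X ω) t| ≤ M)
    {ε : ℝ} (hε : 0 < ε) {k : ℕ} (hk : ((k : ℝ) + 1) * ε ≤ T) (ω : Ω) :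
    |DD X ε k ω| ≤ M := by
  have hk0 : (0:ℝ) ≤ (k : ℝ) * ε := by positivity
  have hab : (k : ℝ) * ε < ((k : ℝ) + 1) * ε := by nlinarith
  obtain ⟨c, hcmem, hceq⟩ := exists_deriv_eq_slope (X ω) hab
    ((hC1 ω).continuous.continuousOn) (((hC1 ω).differentiable one_ne_zero).differentiableOn)
  have hsub : ((k : ℝ) + 1) * ε - (k : ℝ) * ε = ε := by ring
  have hDDc : DD X ε k ω = deriv (X ω) c := by
    rw [DD, hceq, hsub]
  rw [hDDc]
  exact hM ω c ⟨le_trans hk0 hcmem.1.le, le_trans hcmem.2.le hk⟩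

lemma aemeas_DD (hX : AEMeasurable X μ) (ε : ℝ) (k : ℕ) :
    AEMeasurable (fun ω => DD X ε k ω) μ :=
  (((measurable_pi_apply _).comp_aemeasurable hX).sub
    ((measurable_pi_apply _).comp_aemeasurable hX)).div_const ε

lemma integrable_DD (hX : AEMeasurable X μ) (hC1 : ∀ ω, ContDiff ℝ 1 (X ω))
    (hM : ∀ ω, ∀ t ∈ Set.Icc (0:ℝ) T, |deriv (X ω) t| ≤ M)
    {ε : ℝ} (hε : 0 < ε) {k : ℕ} (hk : ((k : ℝ) + 1) * ε ≤ T) :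
    Integrable (fun ω => DD X ε k ω) μ :=
  Integrable.mono' (integrable_const M) (aemeas_DD hX ε k).aestronglyMeasurable
    (ae_of_all _ fun ω => by
      rw [Real.norm_eq_abs]; exact abs_DD_le hC1 hM hε hk ω)

lemma integrable_DD_sq (hX : AEMeasurable X μ) (hC1 : ∀ ω, ContDiff ℝ 1 (X ω))
    (hM : ∀ ω, ∀ t ∈ Set.Icc (0:ℝ) T, |deriv (X ω) t| ≤ M)
    {ε : ℝ} (hε : 0 < ε) {k : ℕ} (hk : ((k : ℝ) + 1) * ε ≤ T) :
    Integrable (fun ω => (DD X ε k ω) ^ 2) μ :=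
  Integrable.mono' (integrable_const (M ^ 2))
    (((aemeas_DD hX ε k).pow_const 2).aestronglyMeasurable)
    (ae_of_all _ fun ω => by
      have h := abs_DD_le hC1 hM hε hk ω
      rw [Real.norm_eq_abs, abs_pow]
      exact pow_le_pow_left₀ (abs_nonneg _) h 2)

lemma qDD_le (hX : AEMeasurable X μ) (hC1 : ∀ ω, ContDiff ℝ 1 (X ω))
    (hM : ∀ ω, ∀ t ∈ Set.Icc (0:ℝ) T, |deriv (X ω) t| ≤ M)
    {ε : ℝ} (hε : 0 < ε) {k : ℕ} (hk : ((k : ℝ) + 1) * ε ≤ T) :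
    qDD μ X ε k ≤ M ^ 2 := by
  have h := integral_mono (integrable_DD_sq hX hC1 hM hε hk) (integrable_const (M ^ 2))
    (fun ω => by
      have h := abs_DD_le hC1 hM hε hk ω
      rw [← sq_abs]
      exact pow_le_pow_left₀ (abs_nonneg _) h 2)
  simpa [measure_univ, qDD] using h


lemma slln (hC1 : ∀ ω, ContDiff ℝ 1 (X ω))
    (hM : ∀ ω, ∀ t ∈ Set.Icc (0:ℝ) T, |deriv (X ω) t| ≤ M)
    (Xs : ℕ → Ω → ℝ → ℝ)
    (hindep : iIndepFun Xs μ)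
    (hident : ∀ n, IdentDistrib (Xs n) X μ μ)
    {ε : ℝ} (hε : 0 < ε) {k : ℕ} (hk : ((k : ℝ) + 1) * ε ≤ T) :
    ∀ᵐ ω ∂μ,
      Tendsto (fun N : ℕ => (∑ n ∈ Finset.range N, DD (Xs n) ε k ω) / N) atTop
        (nhds (mDD μ X ε k)) ∧
      Tendsto (fun N : ℕ => (∑ n ∈ Finset.range N, (DD (Xs n) ε k ω) ^ 2) / N) atTop
        (nhds (qDD μ X ε k)) := by
  set G : (ℝ → ℝ) → ℝ := fun f => (f (((k : ℝ) + 1) * ε) - f ((k : ℝ) * ε)) / ε with hGdef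
  have hG : Measurable G :=
    by rw [hGdef]; fun_prop
  have hG2 : Measurable (fun f => (G f) ^ 2) := hG.pow_const 2
  have hDDeq : ∀ (W : Ω → ℝ → ℝ) (ω : Ω), DD W ε k ω = G (W ω) := fun W ω => rfl
  have hbd : ∀ ω, ‖G (X ω)‖ ≤ M := fun ω => by
    rw [Real.norm_eq_abs, ← hDDeq]; exact abs_DD_le hC1 hM hε hk ω
  have hidG : ∀ n, IdentDistrib (fun ω => G (Xs n ω)) (fun ω => G (X ω)) μ μ :=
    fun n => (hident n).comp hG
  have hidG2 : ∀ n, IdentDistrib (fun ω => (G (Xs n ω)) ^ 2) (fun ω => (G (X ω)) ^ 2) μ μ :=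
    fun n => (hident n).comp hG2
  have hY0bd : ∀ᵐ ω ∂μ, ‖G (Xs 0 ω)‖ ≤ M :=
    (hidG 0).symm.ae_snd (p := fun x => ‖x‖ ≤ M)
      (measurableSet_le measurable_norm measurable_const) (ae_of_all _ hbd)
  have haeY : ∀ n, AEMeasurable (fun ω => G (Xs n ω)) μ :=
    fun n => hG.comp_aemeasurable (hident n).aemeasurable_fst
  have hint : Integrable (fun ω => G (Xs 0 ω)) μ :=
    Integrable.mono' (integrable_const M) (haeY 0).aestronglyMeasurable hY0bd
  have hint2 : Integrable (fun ω => (G (Xs 0 ω)) ^ 2) μ := by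
    refine Integrable.mono' (integrable_const (M ^ 2))
      (((haeY 0).pow_const 2).aestronglyMeasurable) ?_
    filter_upwards [hY0bd] with ω hω
    rw [Real.norm_eq_abs, abs_pow]
    exact pow_le_pow_left₀ (abs_nonneg _) (by rwa [Real.norm_eq_abs] at hω) 2
  have hpind : Pairwise (Function.onFun (IndepFun · · μ) fun n ω => G (Xs n ω)) :=
    fun i j hij => (hindep.comp (fun _ => G) fun _ => hG).indepFun hij
  have hpind2 : Pairwise (Function.onFun (IndepFun · · μ) fun n ω => (G (Xs n ω)) ^ 2) :=
    fun i j hij => (hindep.comp (fun _ f => (G f) ^ 2) fun _ => hG2).indepFun hij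
  have hidY : ∀ i, IdentDistrib (fun ω => G (Xs i ω)) (fun ω => G (Xs 0 ω)) μ μ :=
    fun i => (hidG i).trans (hidG 0).symm
  have hidY2 : ∀ i, IdentDistrib (fun ω => (G (Xs i ω)) ^ 2) (fun ω => (G (Xs 0 ω)) ^ 2) μ μ :=
    fun i => (hidG2 i).trans (hidG2 0).symm
  have h1 := strong_law_ae_real _ hint hpind hidY
  have h2 := strong_law_ae_real _ hint2 hpind2 hidY2
  have hm : (∫ ω, G (Xs 0 ω) ∂μ) = mDD μ X ε k := (hidG 0).integral_eq
  have hq : (∫ ω, (G (Xs 0 ω)) ^ 2 ∂μ) = qDD μ X ε k := (hidG2 0).integral_eq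
  filter_upwards [h1, h2] with ω hω1 hω2
  rw [hm] at hω1
  rw [hq] at hω2
  exact ⟨hω1, hω2⟩


lemma floor_lt_of_lt {ε t : ℝ} (hε : 0 < ε) (ht0 : 0 ≤ t) {K : ℕ} (hKT : t < K * ε) :
    ⌊t / ε⌋₊ < K :=
  (Nat.floor_lt (div_nonneg ht0 hε.le)).2 (by rw [div_lt_iff₀ hε]; linarith [hKT])

lemma floor_mul_le {ε t : ℝ} (hε : 0 < ε) (ht0 : 0 ≤ t) : (⌊t / ε⌋₊ : ℝ) * ε ≤ t := by
  rw [← le_div_iff₀ hε]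
  exact Nat.floor_le (div_nonneg ht0 hε.le)

lemma lt_floor_succ_mul {ε t : ℝ} (hε : 0 < ε) : t < ((⌊t / ε⌋₊ : ℝ) + 1) * ε := by
  rw [← div_lt_iff₀ hε]
  exact Nat.lt_floor_add_one (t / ε)

lemma tendsto_DD_pt (hT : 0 < T) (hC1 : ∀ ω, ContDiff ℝ 1 (X ω))
    {t : ℝ} (ht : t ∈ Set.Ico (0:ℝ) T) (ω : Ω) :
    Tendsto (fun K : ℕ => DD X (T / K) ⌊t / (T / K)⌋₊ ω) atTop (nhds (deriv (X ω) t)) := by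
  rw [Metric.tendsto_atTop]
  intro η hη
  have hcont : Continuous (deriv (X ω)) := (hC1 ω).continuous_deriv le_rfl
  obtain ⟨δ, hδ, hδ'⟩ := Metric.continuous_iff.1 hcont t η hη
  refine ⟨max 1 (⌈T / δ⌉₊ + 1), fun K hK => ?_⟩
  have hK1 : 1 ≤ K := le_trans (le_max_left _ _) hK
  have hK0 : (0:ℝ) < K := by exact_mod_cast hK1
  set ε := T / (K : ℝ) with hεdef
  have hε : 0 < ε := div_pos hT hK0
  have hεδ : ε < δ := by
    have h2 : ((⌈T / δ⌉₊ + 1 : ℕ) : ℝ) ≤ K := by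
      exact_mod_cast le_trans (le_max_right _ _) hK
    have h3 : T / δ < (K : ℝ) := by
      have := Nat.le_ceil (T / δ)
      push_cast at h2
      linarith
    rw [hεdef, div_lt_iff₀ hK0]
    rw [div_lt_iff₀ hδ] at h3
    linarith [h3]
  set k := ⌊t / ε⌋₊ with hkdef
  have ha : (k : ℝ) * ε ≤ t := floor_mul_le hε ht.1
  have hb : t < ((k : ℝ) + 1) * ε := lt_floor_succ_mul hε
  have hab : (k : ℝ) * ε < ((k : ℝ) + 1) * ε := lt_of_le_of_lt ha hb
  obtain ⟨c, hcmem, hceq⟩ := exists_deriv_eq_slope (X ω) hab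
    ((hC1 ω).continuous.continuousOn) (((hC1 ω).differentiable one_ne_zero).differentiableOn)
  have hsub : ((k : ℝ) + 1) * ε - (k : ℝ) * ε = ε := by ring
  have hDDc : DD X ε k ω = deriv (X ω) c := by rw [DD, hceq, hsub]
  rw [hDDc]
  apply hδ'
  rw [Real.dist_eq, abs_sub_lt_iff]
  constructor <;> nlinarith [hcmem.1, hcmem.2]

lemma tendsto_mDD_pt (hT : 0 < T) (hX : AEMeasurable X μ) (hC1 : ∀ ω, ContDiff ℝ 1 (X ω))
    (hM : ∀ ω, ∀ t ∈ Set.Icc (0:ℝ) T, |deriv (X ω) t| ≤ M) (hM0 : 0 ≤ M)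
    {t : ℝ} (ht : t ∈ Set.Ico (0:ℝ) T) :
    Tendsto (fun K : ℕ => mDD μ X (T / K) ⌊t / (T / K)⌋₊) atTop
      (nhds (∫ ω, deriv (X ω) t ∂μ)) := by
  apply tendsto_integral_of_dominated_convergence (fun _ => M)
  · exact fun K => (aemeas_DD hX _ _).aestronglyMeasurable
  · exact integrable_const M
  · intro K
    rcases Nat.eq_zero_or_pos K with h0 | hpos
    · subst h0
      apply ae_of_all
      intro ω
      simp only [DD, Nat.cast_zero, div_zero]
      simpa using hM0
    · apply ae_of_all
      intro ω
      have hK0 : (0:ℝ) < K := by exact_mod_cast hpos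
      have hε : 0 < T / (K:ℝ) := div_pos hT hK0
      have hKT : (K : ℝ) * (T / K) = T := by field_simp
      have hkK : ⌊t / (T / K)⌋₊ < K := floor_lt_of_lt hε ht.1 (by rw [hKT]; exact ht.2)
      have hk : ((⌊t / (T / K)⌋₊ : ℝ) + 1) * (T / K) ≤ T := by
        have h1 : ((⌊t / (T / K)⌋₊ : ℝ) + 1) ≤ (K : ℝ) := by exact_mod_cast hkK
        calc ((⌊t / (T / K)⌋₊ : ℝ) + 1) * (T / K) ≤ (K : ℝ) * (T / K) :=
              mul_le_mul_of_nonneg_right h1 hε.le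
          _ = T := hKT
      rw [Real.norm_eq_abs]
      exact abs_DD_le hC1 hM hε hk ω
  · exact ae_of_all _ fun ω => tendsto_DD_pt hT hC1 ht ω

lemma tendsto_qDD_pt (hT : 0 < T) (hX : AEMeasurable X μ) (hC1 : ∀ ω, ContDiff ℝ 1 (X ω))
    (hM : ∀ ω, ∀ t ∈ Set.Icc (0:ℝ) T, |deriv (X ω) t| ≤ M) (hM0 : 0 ≤ M)
    {t : ℝ} (ht : t ∈ Set.Ico (0:ℝ) T) :
    Tendsto (fun K : ℕ => qDD μ X (T / K) ⌊t / (T / K)⌋₊) atTop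
      (nhds (∫ ω, (deriv (X ω) t) ^ 2 ∂μ)) := by
  apply tendsto_integral_of_dominated_convergence (fun _ => M ^ 2)
  · exact fun K => ((aemeas_DD hX _ _).pow_const 2).aestronglyMeasurable
  · exact integrable_const _
  · intro K
    rcases Nat.eq_zero_or_pos K with h0 | hpos
    · subst h0
      apply ae_of_all
      intro ω
      simp only [DD, Nat.cast_zero, div_zero]
      simpa using pow_le_pow_left₀ le_rfl hM0 2
    · apply ae_of_all
      intro ω
      have hK0 : (0:ℝ) < K := by exact_mod_cast hpos
      have hε : 0 < T / (K:ℝ) := div_pos hT hK0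
      have hKT : (K : ℝ) * (T / K) = T := by field_simp
      have hkK : ⌊t / (T / K)⌋₊ < K := floor_lt_of_lt hε ht.1 (by rw [hKT]; exact ht.2)
      have hk : ((⌊t / (T / K)⌋₊ : ℝ) + 1) * (T / K) ≤ T := by
        have h1 : ((⌊t / (T / K)⌋₊ : ℝ) + 1) ≤ (K : ℝ) := by exact_mod_cast hkK
        calc ((⌊t / (T / K)⌋₊ : ℝ) + 1) * (T / K) ≤ (K : ℝ) * (T / K) :=
              mul_le_mul_of_nonneg_right h1 hε.le
          _ = T := hKT
      rw [Real.norm_eq_abs, abs_pow]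
      exact pow_le_pow_left₀ (abs_nonneg _) (abs_DD_le hC1 hM hε hk ω) 2
  · exact ae_of_all _ fun ω => (tendsto_DD_pt hT hC1 ht ω).pow 2


lemma integral_step {T : ℝ} (hT : 0 < T) {K : ℕ} (hK : 1 ≤ K) (W : ℕ → ℝ) :
    ∫ t in Set.Ico (0:ℝ) T, W ⌊t / (T / K)⌋₊ = ∑ k ∈ Finset.range K, (T / K) * W k := by
  have hK0 : (0:ℝ) < K := by exact_mod_cast hK
  set ε := T / (K : ℝ) with hεdef
  have hε : 0 < ε := div_pos hT hK0
  have hKT : (K : ℝ) * ε = T := by rw [hεdef]; field_simp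
  have hcover : Set.Ico (0:ℝ) T = ⋃ k ∈ Finset.range K, Set.Ico ((k:ℝ) * ε) (((k:ℝ) + 1) * ε) := by
    ext x
    simp only [Set.mem_iUnion, Finset.mem_range, Set.mem_Ico, exists_prop]
    constructor
    · rintro ⟨hx0, hxT⟩
      exact ⟨⌊x / ε⌋₊, floor_lt_of_lt hε hx0 (by rw [hKT]; exact hxT),
        floor_mul_le hε hx0, lt_floor_succ_mul hε⟩
    · rintro ⟨k, hkK, h1, h2⟩
      refine ⟨le_trans (mul_nonneg (Nat.cast_nonneg k) hε.le) h1, lt_of_lt_of_le h2 ?_⟩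
      calc ((k:ℝ) + 1) * ε ≤ (K : ℝ) * ε :=
            mul_le_mul_of_nonneg_right (by exact_mod_cast hkK) hε.le
        _ = T := hKT
  have heq : ∀ k : ℕ, Set.EqOn (fun t => W ⌊t / ε⌋₊) (fun _ => W k)
      (Set.Ico ((k:ℝ) * ε) (((k:ℝ) + 1) * ε)) := by
    intro k x hx
    simp only
    congr 1
    rw [Nat.floor_eq_iff (div_nonneg (le_trans (mul_nonneg (Nat.cast_nonneg k) hε.le) hx.1) hε.le)]
    constructor
    · rw [le_div_iff₀ hε]; linarith [hx.1]
    · rw [div_lt_iff₀ hε]; linarith [hx.2]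
  rw [hcover, integral_biUnion_finset _ (fun k _ => measurableSet_Ico) ?disj ?int]
  case disj =>
    intro i _ j _ hij
    simp only [Function.onFun]
    rw [Set.Ico_disjoint_Ico]
    rcases lt_or_gt_of_ne hij with h | h
    · have : ((i:ℝ) + 1) * ε ≤ (j:ℝ) * ε :=
        mul_le_mul_of_nonneg_right (by exact_mod_cast h) hε.le
      calc min (((i:ℝ) + 1) * ε) (((j:ℝ) + 1) * ε) ≤ ((i:ℝ) + 1) * ε := min_le_left _ _
        _ ≤ (j:ℝ) * ε := this
        _ ≤ max ((i:ℝ) * ε) ((j:ℝ) * ε) := le_max_right _ _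
    · have : ((j:ℝ) + 1) * ε ≤ (i:ℝ) * ε :=
        mul_le_mul_of_nonneg_right (by exact_mod_cast h) hε.le
      calc min (((i:ℝ) + 1) * ε) (((j:ℝ) + 1) * ε) ≤ ((j:ℝ) + 1) * ε := min_le_right _ _
        _ ≤ (i:ℝ) * ε := this
        _ ≤ max ((i:ℝ) * ε) ((j:ℝ) * ε) := le_max_left _ _
  case int =>
    intro k _
    apply IntegrableOn.congr_fun _ (heq k).symm measurableSet_Ico
    rw [integrableOn_const_iff]
    right
    rw [Real.volume_Ico]
    exact ENNReal.ofReal_lt_top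
  · apply Finset.sum_congr rfl
    intro k _
    rw [setIntegral_congr_fun measurableSet_Ico (heq k), setIntegral_const, measureReal_def, Real.volume_Ico,
      show ((k:ℝ) + 1) * ε - (k:ℝ) * ε = ε by ring, ENNReal.toReal_ofReal hε.le, smul_eq_mul]


lemma Lstep_tendsto (hT : 0 < T) (hX : AEMeasurable X μ) (hC1 : ∀ ω, ContDiff ℝ 1 (X ω))
    (hmeas : Measurable fun p : Ω × ℝ => deriv (X p.1) p.2)
    (hM : ∀ ω, ∀ t ∈ Set.Icc (0:ℝ) T, |deriv (X ω) t| ≤ M) (hM0 : 0 ≤ M) :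
    Tendsto (fun K : ℕ => Lstep μ T X (T / K)) atTop (nhds (MPGD μ T X)) := by
  have hdm : ∀ t : ℝ, Measurable (fun ω => deriv (X ω) t) :=
    fun t => hmeas.comp (measurable_id.prodMk measurable_const)
  have hdint : ∀ t ∈ Set.Icc (0:ℝ) T, Integrable (fun ω => deriv (X ω) t) μ := fun t ht =>
    Integrable.mono' (integrable_const M) (hdm t).aestronglyMeasurable
      (ae_of_all _ fun ω => by rw [Real.norm_eq_abs]; exact hM ω t ht)
  have hdint2 : ∀ t ∈ Set.Icc (0:ℝ) T, Integrable (fun ω => (deriv (X ω) t) ^ 2) μ :=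
    fun t ht =>
    Integrable.mono' (integrable_const (M ^ 2)) ((hdm t).pow_const 2).aestronglyMeasurable
      (ae_of_all _ fun ω => by
        rw [Real.norm_eq_abs, abs_pow]
        exact pow_le_pow_left₀ (abs_nonneg _) (hM ω t ht) 2)
  set g : ℝ → ℝ := fun t =>
    Real.sqrt ((∫ ω, (deriv (X ω) t) ^ 2 ∂μ) - (∫ ω, deriv (X ω) t ∂μ) ^ 2) with hg
  set φ : ℕ → ℝ → ℝ := fun K t =>
    Real.sqrt (qDD μ X (T / K) ⌊t / (T / K)⌋₊ - (mDD μ X (T / K) ⌊t / (T / K)⌋₊) ^ 2) with hφ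
  -- dominated convergence on `Ico 0 T`
  have hDCT : Tendsto (fun K : ℕ => ∫ t in Set.Ico (0:ℝ) T, φ K t) atTop
      (nhds (∫ t in Set.Ico (0:ℝ) T, g t)) := by
    apply tendsto_integral_of_dominated_convergence (fun _ => M)
    · intro K
      have hfl : Measurable fun t : ℝ => ⌊t / (T / K)⌋₊ :=
        Nat.measurable_floor.comp (measurable_id.div_const _)
      exact (Real.continuous_sqrt.measurable.comp
        (((measurable_from_nat (f := fun k => qDD μ X (T / K) k)).comp hfl).sub
          (((measurable_from_nat (f := fun k => mDD μ X (T / K) k)).comp hfl).pow_const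
            2))).aestronglyMeasurable
    · exact integrableOn_const (by rw [Real.volume_Ico]; exact ENNReal.ofReal_lt_top.ne)
    · intro K
      rcases Nat.eq_zero_or_pos K with h0 | hpos
      · subst h0
        apply ae_of_all
        intro t
        simp only [hφ, qDD, mDD, DD, Nat.cast_zero, div_zero, MeasureTheory.integral_zero]
        norm_num
        simpa using hM0
      · rw [ae_restrict_iff' measurableSet_Ico]
        apply ae_of_all
        intro t ht
        have hK0 : (0:ℝ) < K := by exact_mod_cast hpos
        have hε : 0 < T / (K:ℝ) := div_pos hT hK0
        have hKT : (K : ℝ) * (T / K) = T := by field_simp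
        have hkK : ⌊t / (T / K)⌋₊ < K := floor_lt_of_lt hε ht.1 (by rw [hKT]; exact ht.2)
        have hk : ((⌊t / (T / K)⌋₊ : ℝ) + 1) * (T / K) ≤ T := by
          have h1 : ((⌊t / (T / K)⌋₊ : ℝ) + 1) ≤ (K : ℝ) := by exact_mod_cast hkK
          calc ((⌊t / (T / K)⌋₊ : ℝ) + 1) * (T / K) ≤ (K : ℝ) * (T / K) :=
                mul_le_mul_of_nonneg_right h1 hε.le
            _ = T := hKT
        have hqle : qDD μ X (T / K) ⌊t / (T / K)⌋₊ ≤ M ^ 2 := qDD_le hX hC1 hM hε hk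
        have harg : qDD μ X (T / K) ⌊t / (T / K)⌋₊ - (mDD μ X (T / K) ⌊t / (T / K)⌋₊) ^ 2
            ≤ M ^ 2 := by nlinarith [sq_nonneg (mDD μ X (T / K) ⌊t / (T / K)⌋₊)]
        rw [Real.norm_eq_abs, abs_of_nonneg (Real.sqrt_nonneg _)]
        calc φ K t ≤ Real.sqrt (M ^ 2) := Real.sqrt_le_sqrt harg
          _ = M := by rw [Real.sqrt_sq hM0]
    · rw [ae_restrict_iff' measurableSet_Ico]
      apply ae_of_all
      intro t ht
      exact (Real.continuous_sqrt.tendsto _).comp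
        ((tendsto_qDD_pt hT hX hC1 hM hM0 ht).sub
          ((tendsto_mDD_pt hT hX hC1 hM hM0 ht).pow 2))
  -- identify the integral of the step function with `T * Lstep`
  have hstep : ∀ K : ℕ, 1 ≤ K →
      ∫ t in Set.Ico (0:ℝ) T, φ K t = T * Lstep μ T X (T / K) := by
    intro K hK
    have hK0 : (0:ℝ) < K := by exact_mod_cast hK
    have hdiv : T / (T / K) = (K : ℝ) := by field_simp
    rw [integral_step hT hK (fun k => Real.sqrt (qDD μ X (T / K) k - (mDD μ X (T / K) k) ^ 2))]
    rw [Lstep, hdiv, Nat.floor_natCast, Finset.mul_sum, Finset.mul_sum]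
    apply Finset.sum_congr rfl
    intro k _
    rw [← mul_assoc, show T * (T / K / T) = T / K by field_simp]
  -- identify the limit integral with `T * MPGD`
  have hlimint : ∫ t in Set.Ico (0:ℝ) T, g t = T * MPGD μ T X := by
    have h2 : ∫ t in Set.Ioc (0:ℝ) T,
        Real.sqrt (∫ ω, (deriv (X ω) t - ∫ ω', deriv (X ω') t ∂μ) ^ 2 ∂μ)
        = ∫ t in Set.Ioc (0:ℝ) T, g t := by
      apply setIntegral_congr_fun measurableSet_Ioc
      intro t ht
      simp only [hg]
      congr 1
      exact var_identity μ (hdint t ⟨ht.1.le, ht.2⟩) (hdint2 t ⟨ht.1.le, ht.2⟩)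
    rw [MPGD, intervalIntegral.integral_of_le hT.le, h2,
      MeasureTheory.integral_Ico_eq_integral_Ioo, ← MeasureTheory.integral_Ioc_eq_integral_Ioo]
    field_simp
  -- conclude
  have hcongr : (fun K : ℕ => ∫ t in Set.Ico (0:ℝ) T, φ K t)
      =ᶠ[atTop] fun K : ℕ => T * Lstep μ T X (T / K) := by
    filter_upwards [eventually_ge_atTop 1] with K hK using hstep K hK
  have h4 : Tendsto (fun K : ℕ => T * Lstep μ T X (T / K)) atTop
      (nhds (T * MPGD μ T X)) := by
    rw [← hlimint]
    exact hDCT.congr' hcongr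
  have h5 := h4.const_mul (1 / T)
  have hfun : (fun K : ℕ => Lstep μ T X (T / K))
      = fun K : ℕ => (1 / T) * (T * Lstep μ T X (T / K)) := by
    funext K
    field_simp
  rw [hfun, show MPGD μ T X = (1 / T) * (T * MPGD μ T X) by field_simp]
  exact h5

end

end Statement13Aux

open Statement13Aux in
/-- **Lemma 2 of the paper.** Let `T > 0`, `(Ω, μ)` a probability space and
`X : Ω → (ℝ → ℝ)` a random continuously differentiable function with jointly measurable and
uniformly bounded derivative on `[0,T]`, and let `(Xs n)` be an i.i.d. sequence of copies of
`X` (as random variables with values in `ℝ → ℝ`, with the product σ-algebra). For a step `ε`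
with `T/ε = K ∈ ℕ` and grid points `t = ε, 2ε, …, T`, consider the empirical quantity
`S_{N,ε} = (ε/T) ∑_t numstd[((Xs n ω t − Xs n ω (t−ε))/ε)_{n=1:N}]`. Then almost surely,
for every admissible `ε` the limit `L ε = lim_{N→∞} S_{N,ε}` exists, and `L ε → MPGD` as
`ε → 0` along steps with `T/ε ∈ ℕ`. -/
theorem statement13 {Ω : Type*} [MeasurableSpace Ω] (μ : Measure Ω) [IsProbabilityMeasure μ]
    (T : ℝ) (hT : 0 < T) (X : Ω → ℝ → ℝ)
    (hC1 : ∀ ω, ContDiff ℝ 1 (X ω))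
    (hmeas : Measurable fun p : Ω × ℝ => deriv (X p.1) p.2)
    (M : ℝ) (hM : ∀ ω, ∀ t ∈ Set.Icc (0:ℝ) T, |deriv (X ω) t| ≤ M)
    (Xs : ℕ → Ω → ℝ → ℝ)
    (hindep : iIndepFun Xs μ)
    (hident : ∀ n, IdentDistrib (Xs n) X μ μ) :
    ∀ᵐ ω ∂μ, ∃ L : ℝ → ℝ,
      (∀ ε : ℝ, ∀ K : ℕ, 0 < ε → (K : ℝ) * ε = T →
        Tendsto (fun N : ℕ => (ε / T) * ∑ k ∈ Finset.range K,
            numstd N (fun n => (Xs n ω (((k : ℝ) + 1) * ε) - Xs n ω ((k : ℝ) * ε)) / ε))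
          atTop (nhds (L ε))) ∧
      (∀ δ > 0, ∃ ε₀ > 0, ∀ ε : ℝ, 0 < ε → ε < ε₀ → ∀ K : ℕ, (K : ℝ) * ε = T →
        |L ε - MPGD μ T X| < δ) := by
  classical
  obtain ⟨ω₀⟩ : Nonempty Ω := by
    by_contra h
    rw [not_nonempty_iff] at h
    have h1 : μ Set.univ = 1 := measure_univ
    rw [Set.univ_eq_empty_iff.2 h] at h1
    simp at h1
  have hM0 : 0 ≤ M := le_trans (abs_nonneg _) (hM ω₀ 0 ⟨le_rfl, hT.le⟩)
  have hX : AEMeasurable X μ := (hident 0).aemeasurable_snd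
  have main1 : ∀ᵐ ω ∂μ, ∀ K k : ℕ, k < K →
      (Tendsto (fun N : ℕ => (∑ n ∈ Finset.range N, DD (Xs n) (T / K) k ω) / N) atTop
        (nhds (mDD μ X (T / K) k)) ∧
       Tendsto (fun N : ℕ => (∑ n ∈ Finset.range N, (DD (Xs n) (T / K) k ω) ^ 2) / N) atTop
        (nhds (qDD μ X (T / K) k))) := by
    rw [ae_all_iff]
    intro K
    rw [ae_all_iff]
    intro k
    by_cases hkK : k < K
    · have hK0 : (0:ℝ) < K := by exact_mod_cast Nat.zero_lt_of_lt hkK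
      have hε : 0 < T / (K : ℝ) := div_pos hT hK0
      have hk : ((k : ℝ) + 1) * (T / K) ≤ T := by
        have h1 : ((k : ℝ) + 1) ≤ (K : ℝ) := by exact_mod_cast hkK
        have hKT : (K : ℝ) * (T / K) = T := by field_simp
        calc ((k : ℝ) + 1) * (T / K) ≤ (K : ℝ) * (T / K) :=
              mul_le_mul_of_nonneg_right h1 hε.le
          _ = T := hKT
      filter_upwards [slln hC1 hM Xs hindep hident hε hk] with ω h
      exact fun _ => h
    · exact ae_of_all _ fun ω h => absurd h hkK
  filter_upwards [main1] with ω hω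
  refine ⟨Lstep μ T X, ?_, ?_⟩
  · intro ε K hε hKT
    have hK0 : K ≠ 0 := by
      rintro rfl
      rw [Nat.cast_zero, zero_mul] at hKT
      exact hT.ne' hKT.symm
    have hKr : ((K : ℕ) : ℝ) ≠ 0 := Nat.cast_ne_zero.2 hK0
    have hεeq : ε = T / K := by
      rw [eq_div_iff hKr, mul_comm]
      exact hKT
    subst hεeq
    have hLval : Lstep μ T X (T / K) = (T / K / T) * ∑ k ∈ Finset.range K,
        Real.sqrt (qDD μ X (T / K) k - (mDD μ X (T / K) k) ^ 2) := by
      rw [Lstep, show T / (T / (K : ℝ)) = (K : ℝ) by field_simp, Nat.floor_natCast]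
    rw [hLval]
    apply Tendsto.const_mul
    apply tendsto_finset_sum
    intro k hk
    have h := hω K k (Finset.mem_range.1 hk)
    have hterm := (h.2.sub (h.1.pow 2))
    have hsqrt := (Real.continuous_sqrt.tendsto _).comp hterm
    have heq : (fun N : ℕ => numstd N
        fun n => (Xs n ω (((k : ℝ) + 1) * (T / K)) - Xs n ω ((k : ℝ) * (T / K))) / (T / K))
        = fun N : ℕ => Real.sqrt
          ((∑ n ∈ Finset.range N, (DD (Xs n) (T / K) k ω) ^ 2) / N
            - ((∑ n ∈ Finset.range N, DD (Xs n) (T / K) k ω) / N) ^ 2) :=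
      funext fun N => numstd_eq N _
    rw [heq]
    exact hsqrt
  · intro δ hδ
    have htendL := Lstep_tendsto hT hX hC1 hmeas hM hM0
    rw [Metric.tendsto_atTop] at htendL
    obtain ⟨K₀, hK₀⟩ := htendL δ hδ
    refine ⟨T / (K₀ + 1), by positivity, ?_⟩
    intro ε hε hεlt K hKT
    have hK0 : (0:ℝ) < K := by
      rcases Nat.eq_zero_or_pos K with h | h
      · subst h
        rw [Nat.cast_zero, zero_mul] at hKT
        linarith
      · exact_mod_cast h
    have hεeq : ε = T / K := by
      rw [eq_div_iff (ne_of_gt hK0), mul_comm]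
      exact hKT
    have hKnat : (K₀ : ℝ) < (K : ℝ) := by
      have hlt : (K : ℝ) * ε < (K : ℝ) * (T / (K₀ + 1)) := mul_lt_mul_of_pos_left hεlt hK0
      rw [hKT] at hlt
      have hpos : (0:ℝ) < (K₀ : ℝ) + 1 := by positivity
      rw [← mul_div_assoc, lt_div_iff₀ hpos] at hlt
      have h2 : ((K₀:ℝ) + 1) * T < (K:ℝ) * T := by linarith
      have h3 : ((K₀:ℝ) + 1) < (K:ℝ) := lt_of_mul_lt_mul_right h2 hT.le
      linarith
    have hKge : K₀ ≤ K := by exact_mod_cast hKnat.le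
    have h := hK₀ K hKge
    rw [Real.dist_eq] at h
    rw [hεeq]
    exact h
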